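/- arXiv:1404.2459 — 2 statements merged into one kernel-verified Lean document; each statement's English description precedes it below -/
import Mathlib

section
/- Let A₁, A₂ ∈ ℝ, h₁, h₂ > 0; let u be a nonnegative grid function and let Λ₁⁺, Λ₁⁻, Λ₂⁺, Λ₂⁻ ∈ [0, 2]. If Δτ satisfies Δτ ≤ h₁h₂/(2(|A₁|h₂ + |A₂|h₁)), then the quantity f = u_{i,j}/Δτ + A₁⁺Λ₁⁺(u_{i+1,j} − u_{i,j})/h₁ − A₁⁻Λ₁⁻(u_{i,j} − u_{i−1,j})/h₁ + A₂⁺Λ₂⁺(u_{i,j+1} − u_{i,j})/h₂ − A₂⁻Λ₂⁻(u_{i,j} − u_{i,j−1})/h₂ is nonnegative, where A⁺ = max(0, A), A⁻ = max(0, −A). -/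
theorem explicit_rhs_nonneg (A₁ A₂ h₁ h₂ Δτ Λ₁p Λ₁m Λ₂p Λ₂m : ℝ)
    (uij uipj uimj uijp uijm : ℝ)
    (hh₁ : 0 < h₁) (hh₂ : 0 < h₂)
    (hu : 0 ≤ uij) (hu1 : 0 ≤ uipj) (hu2 : 0 ≤ uimj) (hu3 : 0 ≤ uijp) (hu4 : 0 ≤ uijm)
    (hΛ₁p : Λ₁p ∈ Set.Icc (0 : ℝ) 2) (hΛ₁m : Λ₁m ∈ Set.Icc (0 : ℝ) 2)
    (hΛ₂p : Λ₂p ∈ Set.Icc (0 : ℝ) 2) (hΛ₂m : Λ₂m ∈ Set.Icc (0 : ℝ) 2)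
    (hA : 0 < |A₁| + |A₂|)
    (hΔτ : 0 < Δτ) (hbound : Δτ ≤ h₁ * h₂ / (2 * (|A₁| * h₂ + |A₂| * h₁))) :
    0 ≤ uij / Δτ + max 0 A₁ * Λ₁p * (uipj - uij) / h₁
      - max 0 (-A₁) * Λ₁m * (uij - uimj) / h₁
      + max 0 A₂ * Λ₂p * (uijp - uij) / h₂
      - max 0 (-A₂) * Λ₂m * (uij - uijm) / h₂ := by
  obtain ⟨hΛ₁p0, hΛ₁p2⟩ := hΛ₁p
  obtain ⟨hΛ₁m0, hΛ₁m2⟩ := hΛ₁m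
  obtain ⟨hΛ₂p0, hΛ₂p2⟩ := hΛ₂p
  obtain ⟨hΛ₂m0, hΛ₂m2⟩ := hΛ₂m
  set a1p := max 0 A₁ with ha1p
  set a1m := max 0 (-A₁) with ha1m
  set a2p := max 0 A₂ with ha2p
  set a2m := max 0 (-A₂) with ha2m
  have ha1p0 : 0 ≤ a1p := le_max_left _ _
  have ha1m0 : 0 ≤ a1m := le_max_left _ _
  have ha2p0 : 0 ≤ a2p := le_max_left _ _
  have ha2m0 : 0 ≤ a2m := le_max_left _ _
  have hs1 : a1p + a1m = |A₁| := by
    rcases le_or_gt 0 A₁ with h | h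
    · simp [ha1p, ha1m, abs_of_nonneg h, max_eq_left (neg_nonpos.mpr h), max_eq_right h]
    · simp [ha1p, ha1m, abs_of_neg h, max_eq_left h.le, max_eq_right (neg_nonneg.mpr h.le)]
  have hs2 : a2p + a2m = |A₂| := by
    rcases le_or_gt 0 A₂ with h | h
    · simp [ha2p, ha2m, abs_of_nonneg h, max_eq_left (neg_nonpos.mpr h), max_eq_right h]
    · simp [ha2p, ha2m, abs_of_neg h, max_eq_left h.le, max_eq_right (neg_nonneg.mpr h.le)]
  clear_value a1p a1m a2p a2m
  have hden : 0 < 2 * (|A₁| * h₂ + |A₂| * h₁) := by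
    rcases lt_or_ge 0 |A₁| with h | h
    · nlinarith [abs_nonneg A₂, mul_pos h hh₂, mul_nonneg (abs_nonneg A₂) hh₁.le]
    · have h0 : |A₁| = 0 := le_antisymm h (abs_nonneg _)
      have h2 : 0 < |A₂| := by linarith
      nlinarith [mul_pos h2 hh₁]
  have hkey : 2 * (|A₁| * h₂ + |A₂| * h₁) * Δτ ≤ h₁ * h₂ := by
    rw [div_eq_mul_inv] at hbound
    calc 2 * (|A₁| * h₂ + |A₂| * h₁) * Δτ
        ≤ 2 * (|A₁| * h₂ + |A₂| * h₁) * (h₁ * h₂ * (2 * (|A₁| * h₂ + |A₂| * h₁))⁻¹) := by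
          exact mul_le_mul_of_nonneg_left hbound hden.le
      _ = h₁ * h₂ := by field_simp; exact div_self (ne_of_gt (by linarith))
  have hc1 : a1p * Λ₁p + a1m * Λ₁m ≤ 2 * |A₁| := by nlinarith
  have hc2 : a2p * Λ₂p + a2m * Λ₂m ≤ 2 * |A₂| := by nlinarith
  have coeff : Δτ * h₂ * (a1p * Λ₁p + a1m * Λ₁m) + Δτ * h₁ * (a2p * Λ₂p + a2m * Λ₂m)
      ≤ h₁ * h₂ := by
    calc Δτ * h₂ * (a1p * Λ₁p + a1m * Λ₁m) + Δτ * h₁ * (a2p * Λ₂p + a2m * Λ₂m)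
        ≤ Δτ * h₂ * (2 * |A₁|) + Δτ * h₁ * (2 * |A₂|) :=
          add_le_add (mul_le_mul_of_nonneg_left hc1 (mul_nonneg hΔτ.le hh₂.le))
            (mul_le_mul_of_nonneg_left hc2 (mul_nonneg hΔτ.le hh₁.le))
      _ = 2 * (|A₁| * h₂ + |A₂| * h₁) * Δτ := by ring
      _ ≤ h₁ * h₂ := hkey
  have t1 : 0 ≤ Δτ * h₂ * (a1p * Λ₁p) * uipj :=
    mul_nonneg (mul_nonneg (mul_nonneg hΔτ.le hh₂.le) (mul_nonneg ha1p0 hΛ₁p0)) hu1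
  have t2 : 0 ≤ Δτ * h₂ * (a1m * Λ₁m) * uimj :=
    mul_nonneg (mul_nonneg (mul_nonneg hΔτ.le hh₂.le) (mul_nonneg ha1m0 hΛ₁m0)) hu2
  have t3 : 0 ≤ Δτ * h₁ * (a2p * Λ₂p) * uijp :=
    mul_nonneg (mul_nonneg (mul_nonneg hΔτ.le hh₁.le) (mul_nonneg ha2p0 hΛ₂p0)) hu3
  have t4 : 0 ≤ Δτ * h₁ * (a2m * Λ₂m) * uijm :=
    mul_nonneg (mul_nonneg (mul_nonneg hΔτ.le hh₁.le) (mul_nonneg ha2m0 hΛ₂m0)) hu4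
  have hcu : uij * (Δτ * h₂ * (a1p * Λ₁p + a1m * Λ₁m) + Δτ * h₁ * (a2p * Λ₂p + a2m * Λ₂m))
      ≤ uij * (h₁ * h₂) := mul_le_mul_of_nonneg_left coeff hu
  have key : 0 ≤ uij * h₁ * h₂ + Δτ * h₂ * (a1p * Λ₁p * (uipj - uij) - a1m * Λ₁m * (uij - uimj))
      + Δτ * h₁ * (a2p * Λ₂p * (uijp - uij) - a2m * Λ₂m * (uij - uijm)) := by
    linarith [t1, t2, t3, t4, hcu]
  have hpos : (0:ℝ) < Δτ * h₁ * h₂ := by positivity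
  have hdiv := div_nonneg key hpos.le
  calc (0:ℝ) ≤ (uij * h₁ * h₂ + Δτ * h₂ * (a1p * Λ₁p * (uipj - uij) - a1m * Λ₁m * (uij - uimj))
      + Δτ * h₁ * (a2p * Λ₂p * (uijp - uij) - a2m * Λ₂m * (uij - uijm))) / (Δτ * h₁ * h₂) := hdiv
    _ = uij / Δτ + a1p * Λ₁p * (uipj - uij) / h₁ - a1m * Λ₁m * (uij - uimj) / h₁
      + a2p * Λ₂p * (uijp - uij) / h₂ - a2m * Λ₂m * (uij - uijm) / h₂ := by
        field_simp
        ring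
end

section
/- Let M be an n×n real matrix that is strictly diagonally dominant with positive diagonal entries and nonpositive off-diagonal entries. Then M is invertible and M⁻¹ has all entries nonnegative; consequently, if F ≥ 0 componentwise and M·U = F, then U ≥ 0 componentwise. -/
open Matrix

theorem M_matrix_inverse_nonneg {n : ℕ} (M : Matrix (Fin n) (Fin n) ℝ)
    (hdiag : ∀ k, 0 < M k k)
    (hoff : ∀ k p, k ≠ p → M k p ≤ 0)
    (hdd : ∀ k, ∑ p ∈ Finset.univ.erase k, |M k p| < |M k k|) :
    IsUnit M ∧ (∀ k p, 0 ≤ M⁻¹ k p) ∧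
    ∀ F U : Fin n → ℝ, (∀ i, 0 ≤ F i) → M.mulVec U = F → ∀ i, 0 ≤ U i := by
  -- key nonnegativity lemma
  have key : ∀ U : Fin n → ℝ, (∀ i, 0 ≤ M.mulVec U i) → ∀ i, 0 ≤ U i := by
    intro U hU i
    by_contra hneg
    push_neg at hneg
    obtain ⟨j, -, hj⟩ := Finset.exists_min_image Finset.univ U ⟨i, Finset.mem_univ i⟩
    have hUj : U j < 0 := lt_of_le_of_lt (hj i (Finset.mem_univ i)) hneg
    have hsum : M.mulVec U j ≤ (M j j + ∑ p ∈ Finset.univ.erase j, M j p) * U j := by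
      rw [mulVec, dotProduct, ← Finset.add_sum_erase _ _ (Finset.mem_univ j)]
      rw [add_mul, Finset.sum_mul]
      refine add_le_add le_rfl (Finset.sum_le_sum fun p hp => ?_)
      exact mul_le_mul_of_nonpos_left
          (hj p (Finset.mem_univ p)) (hoff j p (Finset.ne_of_mem_erase hp).symm)
    have hpos : 0 < M j j + ∑ p ∈ Finset.univ.erase j, M j p := by
      have h1 : ∑ p ∈ Finset.univ.erase j, |M j p| = - ∑ p ∈ Finset.univ.erase j, M j p := by
        rw [← Finset.sum_neg_distrib]
        exact Finset.sum_congr rfl fun p hp =>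
          abs_of_nonpos (hoff j p (Finset.ne_of_mem_erase hp).symm)
      have := hdd j
      rw [h1, abs_of_pos (hdiag j)] at this
      linarith
    have := hU j
    nlinarith
  have hdet : M.det ≠ 0 := by
    apply det_ne_zero_of_sum_row_lt_diag
    simpa [Real.norm_eq_abs] using hdd
  have hunit : IsUnit M := (Matrix.isUnit_iff_isUnit_det M).mpr (isUnit_iff_ne_zero.mpr hdet)
  refine ⟨hunit, ?_, fun F U hF hMU i => key U (fun j => by rw [hMU]; exact hF j) i⟩
  intro k p
  have hMM : M.mulVec (fun q => M⁻¹ q p) = fun q => (1 : Matrix (Fin n) (Fin n) ℝ) q p := by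
    funext q
    have := Matrix.mul_nonsing_inv M (isUnit_iff_ne_zero.mpr hdet)
    calc M.mulVec (fun q => M⁻¹ q p) q = (M * M⁻¹) q p := by
          simp [mulVec, dotProduct, Matrix.mul_apply]
      _ = (1 : Matrix (Fin n) (Fin n) ℝ) q p := by rw [this]
  exact key (fun q => M⁻¹ q p) (fun j => by
    rw [hMM]; by_cases h : j = p <;> simp [Matrix.one_apply, h]) k
end
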